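/- For every δ₀ ∈ (0,1) there exists a constant δ = δ(δ₀) > 0 with the following property. Let P be a probability distribution over a finite alphabet 𝒜 = {a₁, a₂, …, a_{|𝒜|}}, let s ≥ 1 be an integer with 3/(sδ₀) < min{P(a₁), P(a₂)}, and let P̂ be an empirical type of denominator s (i.e., all P̂(a) are integer multiples of 1/s) such that min{ P̂(a₁)/P(a₁), P(a₂)/P̂(a₂) } ≥ δ₀ and P̂(a₂) ≥ 1/s. Define P̄ by P̄(a₁) = P̂(a₁) − 3/s, P̄(a₂) = P̂(a₂) + 3/s, and P̄(a_i) = P̂(a_i) for all other a_i. Then P^s(T(P̄)) ≥ δ · P^s(T(P̂)), where P^s is the s-fold product of P on 𝒜^s and T(P̂), T(P̄) are the sets of sequences in 𝒜^s whose empirical type is P̂, respectively P̄. -/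

import Mathlib

open scoped BigOperators

namespace Async

/-- `μ` is a probability distribution on a finite alphabet. -/
def IsDist {A : Type*} [Fintype A] (μ : A → ℝ) : Prop :=
  (∀ a, 0 ≤ μ a) ∧ ∑ a, μ a = 1

open scoped Classical in
/-- `P^s(T(V))`: the probability, under the `s`-fold product of `P`, of the type class
of `V`, i.e. of the set of sequences of length `s` whose empirical type is `V`. -/
noncomputable def typeProb {A : Type*} [Fintype A] (P : A → ℝ) (s : ℕ) (V : A → ℝ) : ℝ :=
  ∑ z : Fin s → A,
    if (∀ a, ((Finset.univ.filter (fun j : Fin s => z j = a)).card : ℝ) / s = V a) then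
      ∏ j, P (z j)
    else 0

set_option linter.unusedSectionVars false
set_option linter.unusedVariables false
set_option linter.unusedTactic false

variable {A : Type} [Fintype A] [DecidableEq A]

/-- fiber of a sequence over a letter -/
def fib (s : ℕ) (z : Fin s → A) (a : A) : Finset (Fin s) :=
  Finset.univ.filter (fun j => z j = a)

/-- type class with counts `m` -/
def Tk (s : ℕ) (m : A → ℕ) : Finset (Fin s → A) :=
  Finset.univ.filter (fun z => ∀ a, (fib s z a).card = m a)

/-- flip the letters at positions `S` to `b` -/
def flp (s : ℕ) (b : A) (S : Finset (Fin s)) (z : Fin s → A) : Fin s → A :=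
  fun j => if j ∈ S then b else z j

lemma fib_flp_self {s : ℕ} {b c : A} {S : Finset (Fin s)} {z : Fin s → A}
    (hS : S ⊆ fib s z c) (hbc : b ≠ c) :
    fib s (flp s b S z) b = fib s z b ∪ S := by
  ext j
  simp only [fib, flp, Finset.mem_filter, Finset.mem_univ, true_and, Finset.mem_union]
  by_cases hj : j ∈ S
  · simp [hj]
  · simp [hj]

lemma fib_flp_src {s : ℕ} {b c : A} {S : Finset (Fin s)} {z : Fin s → A}
    (hS : S ⊆ fib s z c) (hbc : b ≠ c) :
    fib s (flp s b S z) c = fib s z c \ S := by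
  ext j
  simp only [fib, Finset.mem_filter, Finset.mem_univ, true_and, Finset.mem_sdiff]
  simp only [flp]
  by_cases hj : j ∈ S
  · have hz : z j = c := by
      have := hS hj; simpa [fib, Finset.mem_filter] using this
    simp [hj, hbc, hz]
  · simp [hj]

lemma fib_flp_other {s : ℕ} {b c a : A} {S : Finset (Fin s)} {z : Fin s → A}
    (hS : S ⊆ fib s z c) (hab : a ≠ b) (hac : a ≠ c) :
    fib s (flp s b S z) a = fib s z a := by
  ext j
  simp only [fib, Finset.mem_filter, Finset.mem_univ, true_and]
  simp only [flp]
  by_cases hj : j ∈ S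
  · have hz : z j = c := by
      have := hS hj; simpa [fib, Finset.mem_filter] using this
    simp [hj, hz, Ne.symm hab, Ne.symm hac]
  · simp [hj]

lemma disj_fib {s : ℕ} {b c : A} {S : Finset (Fin s)} {z : Fin s → A}
    (hS : S ⊆ fib s z c) (hbc : b ≠ c) : Disjoint (fib s z b) S := by
  refine Finset.disjoint_left.2 fun j hjb hjS => ?_
  have h1 : z j = b := by simpa [fib, Finset.mem_filter] using hjb
  have h2 : z j = c := by simpa [fib, Finset.mem_filter] using (hS hjS)
  exact hbc (h1 ▸ h2 ▸ rfl)

lemma card_fib_flp_self {s : ℕ} {b c : A} {S : Finset (Fin s)} {z : Fin s → A}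
    (hS : S ⊆ fib s z c) (hbc : b ≠ c) :
    (fib s (flp s b S z) b).card = (fib s z b).card + S.card := by
  rw [fib_flp_self hS hbc, Finset.card_union_of_disjoint (disj_fib hS hbc)]

lemma card_fib_flp_src {s : ℕ} {b c : A} {S : Finset (Fin s)} {z : Fin s → A}
    (hS : S ⊆ fib s z c) (hbc : b ≠ c) :
    (fib s (flp s b S z) c).card = (fib s z c).card - S.card := by
  rw [fib_flp_src hS hbc, Finset.card_sdiff_of_subset hS]

lemma flp_flp {s : ℕ} {b c : A} {S : Finset (Fin s)} {z : Fin s → A}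
    (hS : S ⊆ fib s z c) : flp s c S (flp s b S z) = z := by
  funext j
  by_cases hj : j ∈ S
  · have hz : z j = c := by
      have := hS hj; simpa [fib, Finset.mem_filter] using this
    simp [flp, hj, hz]
  · simp [flp, hj]

lemma subset_fib_flp {s : ℕ} (b : A) (S : Finset (Fin s)) (z : Fin s → A) :
    S ⊆ fib s (flp s b S z) b := by
  intro j hj; simp [fib, flp, Finset.mem_filter, hj]



lemma prod_eq_prod_pow (P : A → ℝ) {s : ℕ} (z : Fin s → A) :
    ∏ j, P (z j) = ∏ a, P a ^ (fib s z a).card := by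
  rw [← Finset.prod_fiberwise_of_maps_to (g := z) (t := Finset.univ)
      (fun j _ => Finset.mem_univ _) (fun j => P (z j))]
  refine Finset.prod_congr rfl fun a _ => ?_
  have h : ∀ j ∈ Finset.filter (fun i => z i = a) Finset.univ, P (z j) = P a := fun j hj => by
    have : z j = a := (Finset.mem_filter.1 hj).2
    rw [this]
  rw [Finset.prod_congr rfl h, Finset.prod_const]
  rfl

lemma typeProb_eq_card_mul (P : A → ℝ) {s : ℕ} (hs : 0 < s) (m : A → ℕ) :
    typeProb P s (fun a => (m a : ℝ) / s) = ((Tk s m).card : ℝ) * ∏ a, P a ^ m a := by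
  classical
  have hiff : ∀ z : Fin s → A,
      (∀ a, ((Finset.univ.filter (fun j : Fin s => z j = a)).card : ℝ) / s = (m a : ℝ) / s)
        ↔ z ∈ Tk s m := by
    intro z
    simp only [Tk, Finset.mem_filter, Finset.mem_univ, true_and]
    simp only [fib]
    constructor
    · intro h a
      have h2 := h a
      have hs' : (s : ℝ) ≠ 0 := by positivity
      field_simp at h2
      exact_mod_cast h2
    · intro h a; rw [h a]
  rw [typeProb]; beta_reduce
  simp only [show ∀ (z : Fin s → A) (a : A),
      (@Finset.filter (Fin s) (fun j => z j = a) (fun j => Classical.propDecidable (z j = a))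
        Finset.univ) = fib s z a from fun z a => by unfold fib; congr]
  trans (∑ z : Fin s → A, if z ∈ Tk s m then ∏ j, P (z j) else 0)
  · refine Finset.sum_congr rfl fun z _ => ?_
    split_ifs with h1 h2 h2
    · rfl
    · exact absurd ((hiff z).1 h1) h2
    · exact absurd ((hiff z).2 h2) h1
    · rfl
  rw [Finset.sum_ite_mem, Finset.univ_inter]
  rw [Finset.sum_congr rfl (fun z hz => ?_), Finset.sum_const, nsmul_eq_mul]
  rw [prod_eq_prod_pow]
  refine Finset.prod_congr rfl fun a _ => ?_
  have : (fib s z a).card = m a := by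
    simpa [Tk, Finset.mem_filter] using (Finset.mem_filter.1 hz).2 a
  rw [this]

lemma mem_Tk {s : ℕ} {m : A → ℕ} {z : Fin s → A} :
    z ∈ Tk s m ↔ ∀ a, (fib s z a).card = m a := by
  simp [Tk, Finset.mem_filter]

/-- the counting identity -/
lemma card_Tk_mul_choose {s : ℕ} (a₁ a₂ : A) (hne : a₁ ≠ a₂) (m : A → ℕ) (hm : 3 ≤ m a₁) :
    (Tk s m).card * (m a₁).choose 3
      = (Tk s (fun a => if a = a₁ then m a₁ - 3 else if a = a₂ then m a₂ + 3 else m a)).card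
        * (m a₂ + 3).choose 3 := by
  set mb : A → ℕ := fun a => if a = a₁ then m a₁ - 3 else if a = a₂ then m a₂ + 3 else m a with hmb
  have hmb1 : mb a₁ = m a₁ - 3 := by simp [hmb]
  have hmb2 : mb a₂ = m a₂ + 3 := by simp [hmb, hne.symm]
  have hmbo : ∀ a, a ≠ a₁ → a ≠ a₂ → mb a = m a := by intro a h1 h2; simp [hmb, h1, h2]
  have h1 : (Tk s m).card * (m a₁).choose 3
      = ((Tk s m).sigma (fun z => Finset.powersetCard 3 (fib s z a₁))).card := by
    rw [Finset.card_sigma]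
    rw [Finset.sum_congr rfl (fun z hz => ?_), Finset.sum_const, smul_eq_mul]
    rw [Finset.card_powersetCard, (mem_Tk.1 hz) a₁]
  have h2 : (Tk s mb).card * (m a₂ + 3).choose 3
      = ((Tk s mb).sigma (fun z => Finset.powersetCard 3 (fib s z a₂))).card := by
    rw [Finset.card_sigma]
    rw [Finset.sum_congr rfl (fun z hz => ?_), Finset.sum_const, smul_eq_mul]
    rw [Finset.card_powersetCard, (mem_Tk.1 hz) a₂, hmb2]
  rw [h1, h2]
  refine Finset.card_bij' (fun p hp => ⟨flp s a₂ p.2 p.1, p.2⟩)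
    (fun p hp => ⟨flp s a₁ p.2 p.1, p.2⟩) ?_ ?_ ?_ ?_
  · rintro ⟨z, S⟩ hp
    rw [Finset.mem_sigma] at hp ⊢
    obtain ⟨hz, hP⟩ := hp
    rw [Finset.mem_powersetCard] at hP
    obtain ⟨hSsub, hScard⟩ := hP
    have hz' := mem_Tk.1 hz
    dsimp only at hz' hSsub hScard ⊢
    constructor
    · rw [mem_Tk]
      intro a
      by_cases ha1 : a = a₁
      · rw [ha1]
        rw [card_fib_flp_src hSsub hne.symm, hz' a₁, hScard, hmb1]
      by_cases ha2 : a = a₂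
      · rw [ha2]
        rw [card_fib_flp_self hSsub hne.symm, hz' a₂, hScard, hmb2]
      · rw [fib_flp_other hSsub ha2 ha1, hz' a, hmbo a ha1 ha2]
    · rw [Finset.mem_powersetCard]
      exact ⟨subset_fib_flp _ _ _, hScard⟩
  · rintro ⟨z, S⟩ hp
    rw [Finset.mem_sigma] at hp ⊢
    obtain ⟨hz, hP⟩ := hp
    rw [Finset.mem_powersetCard] at hP
    obtain ⟨hSsub, hScard⟩ := hP
    have hz' := mem_Tk.1 hz
    dsimp only at hz' hSsub hScard ⊢
    constructor
    · rw [mem_Tk]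
      intro a
      by_cases ha1 : a = a₁
      · rw [ha1]
        rw [card_fib_flp_self hSsub hne, hz' a₁, hScard, hmb1, Nat.sub_add_cancel hm]
      by_cases ha2 : a = a₂
      · rw [ha2]
        rw [card_fib_flp_src hSsub hne, hz' a₂, hScard, hmb2, Nat.add_sub_cancel]
      · rw [fib_flp_other hSsub ha1 ha2, hz' a, hmbo a ha1 ha2]
    · rw [Finset.mem_powersetCard]
      exact ⟨subset_fib_flp _ _ _, hScard⟩
  · rintro ⟨z, S⟩ hp
    rw [Finset.mem_sigma] at hp
    obtain ⟨hz, hP⟩ := hp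
    rw [Finset.mem_powersetCard] at hP
    have : flp s a₁ S (flp s a₂ S z) = z := flp_flp hP.1
    simp [this]
  · rintro ⟨z, S⟩ hp
    rw [Finset.mem_sigma] at hp
    obtain ⟨hz, hP⟩ := hp
    rw [Finset.mem_powersetCard] at hP
    have : flp s a₂ S (flp s a₁ S z) = z := flp_flp hP.1
    simp [this]

lemma two_choose_two (n : ℕ) : 2 * (n+2).choose 2 = (n+2)*(n+1) := by
  induction n with
  | zero => rfl
  | succ k ih =>
    have : (k+3).choose 2 = (k+2).choose 1 + (k+2).choose 2 := Nat.choose_succ_succ (k+2) 1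
    rw [show k+1+2 = k+3 from rfl, this, Nat.choose_one_right, Nat.mul_add, ih]
    ring

lemma six_choose_three (n : ℕ) : 6 * (n+3).choose 3 = (n+3)*(n+2)*(n+1) := by
  induction n with
  | zero => rfl
  | succ k ih =>
    have h : (k+4).choose 3 = (k+3).choose 2 + (k+3).choose 3 := Nat.choose_succ_succ (k+3) 2
    have h2 := two_choose_two (k+1)
    rw [show k+1+3 = k+4 from rfl, h, Nat.mul_add, ih]
    rw [show k+1+2 = k+3 from rfl] at h2
    nlinarith [h2]

lemma weight_shift (P : A → ℝ) (a₁ a₂ : A) (hne : a₁ ≠ a₂) (m : A → ℕ) (hm : 3 ≤ m a₁) :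
    (∏ a, P a ^ (if a = a₁ then m a₁ - 3 else if a = a₂ then m a₂ + 3 else m a)) * P a₁ ^ 3
      = (∏ a, P a ^ m a) * P a₂ ^ 3 := by
  have key : ∀ (f : A → ℕ), ∏ a, P a ^ f a
      = P a₁ ^ f a₁ * (P a₂ ^ f a₂ * ∏ a ∈ (Finset.univ.erase a₁).erase a₂, P a ^ f a) := by
    intro f
    rw [Finset.mul_prod_erase _ (fun a => P a ^ f a)
        (Finset.mem_erase.2 ⟨hne.symm, Finset.mem_univ a₂⟩),
      Finset.mul_prod_erase _ (fun a => P a ^ f a) (Finset.mem_univ a₁)]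
  rw [key, key]
  have hrest : ∏ a ∈ (Finset.univ.erase a₁).erase a₂,
      P a ^ (if a = a₁ then m a₁ - 3 else if a = a₂ then m a₂ + 3 else m a)
      = ∏ a ∈ (Finset.univ.erase a₁).erase a₂, P a ^ m a := by
    refine Finset.prod_congr rfl fun a ha => ?_
    have h2 : a ≠ a₂ := (Finset.mem_erase.1 ha).1
    have h1 : a ≠ a₁ := (Finset.mem_erase.1 (Finset.mem_erase.1 ha).2).1
    simp [h1, h2]
  rw [hrest]
  simp only [if_pos rfl, if_neg hne.symm, if_neg hne]
  have e1 : P a₁ ^ (m a₁ - 3) * P a₁ ^ 3 = P a₁ ^ m a₁ := by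
    rw [← pow_add, Nat.sub_add_cancel hm]
  have e2 : P a₂ ^ (m a₂ + 3) = P a₂ ^ m a₂ * P a₂ ^ 3 := by rw [← pow_add]
  calc P a₁ ^ (m a₁ - 3) * (P a₂ ^ (m a₂ + 3) * ∏ a ∈ (Finset.univ.erase a₁).erase a₂, P a ^ m a)
        * P a₁ ^ 3
      = (P a₁ ^ (m a₁ - 3) * P a₁ ^ 3)
        * (P a₂ ^ m a₂ * P a₂ ^ 3 * ∏ a ∈ (Finset.univ.erase a₁).erase a₂, P a ^ m a) := by
        rw [e2]; ring
    _ = P a₁ ^ m a₁ * (P a₂ ^ m a₂ * ∏ a ∈ (Finset.univ.erase a₁).erase a₂, P a ^ m a)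
        * P a₂ ^ 3 := by rw [e1]; ring

set_option maxHeartbeats 1000000 in
/-- **Lemma 1 (bucket).** For every `δ₀ ∈ (0,1)` there is a `δ = δ(δ₀) > 0` such that:
for every finite alphabet `A`, distribution `P` on `A`, integer `s ≥ 1` with
`3/(sδ₀) < min{P(a₁),P(a₂)}`, and empirical type `P̂` of denominator `s` with
`min{P̂(a₁)/P(a₁), P(a₂)/P̂(a₂)} ≥ δ₀` and `P̂(a₂) ≥ 1/s`, the shifted type `P̄`
(moving mass `3/s` from `a₁` to `a₂`) satisfies `P^s(T(P̄)) ≥ δ · P^s(T(P̂))`. -/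
theorem bucket (δ₀ : ℝ) (hδ₀0 : 0 < δ₀) (hδ₀1 : δ₀ < 1) :
    ∃ δ : ℝ, 0 < δ ∧
      ∀ (A : Type) [Fintype A] [DecidableEq A] (P : A → ℝ), IsDist P →
      ∀ (s : ℕ), 1 ≤ s → ∀ (a₁ a₂ : A), a₁ ≠ a₂ →
      3 / (s * δ₀) < min (P a₁) (P a₂) →
      ∀ (Phat : A → ℝ), IsDist Phat → (∀ a, ∃ k : ℕ, Phat a = (k : ℝ) / s) →
      δ₀ ≤ min (Phat a₁ / P a₁) (P a₂ / Phat a₂) →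
      1 / (s : ℝ) ≤ Phat a₂ →
      δ * typeProb P s Phat ≤
        typeProb P s (fun a =>
          if a = a₁ then Phat a₁ - 3 / s
          else if a = a₂ then Phat a₂ + 3 / s
          else Phat a) := by
  refine ⟨δ₀^6 / 64, by positivity, ?_⟩
  intro A _ _ P hP s hs a₁ a₂ hne hmin Phat hPhat hPk hδmin hP2
  have hs0 : (0:ℝ) < s := by exact_mod_cast hs
  choose m hmspec using hPk
  have hPa1 : 0 < P a₁ := lt_of_le_of_lt (by positivity) (lt_of_lt_of_le hmin (min_le_left _ _))
  have hPa2 : 0 < P a₂ := lt_of_le_of_lt (by positivity) (lt_of_lt_of_le hmin (min_le_right _ _))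
  have hmin1 : δ₀ ≤ Phat a₁ / P a₁ := le_trans hδmin (min_le_left _ _)
  have hmin2 : δ₀ ≤ P a₂ / Phat a₂ := le_trans hδmin (min_le_right _ _)
  have hPhat1 : δ₀ * P a₁ ≤ Phat a₁ := by
    rw [le_div_iff₀ hPa1] at hmin1; linarith
  -- m a₂ ≥ 1
  have hm2 : 1 ≤ m a₂ := by
    have : (1:ℝ)/s ≤ (m a₂ : ℝ)/s := by rw [← hmspec a₂]; exact hP2
    have : (1:ℝ) ≤ (m a₂ : ℝ) := by
      rw [div_le_div_iff₀ hs0 hs0] at this; nlinarith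
    exact_mod_cast this
  have hm2R : (1:ℝ) ≤ (m a₂ : ℝ) := by exact_mod_cast hm2
  have hPhat2pos : 0 < Phat a₂ := by
    rw [hmspec a₂]; exact div_pos (by linarith) hs0
  -- δ₀ * m a₂ ≤ s * P a₂
  have hk2 : δ₀ * (m a₂ : ℝ) ≤ s * P a₂ := by
    rw [le_div_iff₀ hPhat2pos, hmspec a₂] at hmin2
    have h2 : δ₀ * (m a₂ : ℝ) / s ≤ P a₂ := by rw [mul_div_assoc]; exact hmin2
    rw [div_le_iff₀ hs0] at h2
    linarith
  -- s * (δ₀ * P a₁) ≤ m a₁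
  have hk1 : s * (δ₀ * P a₁) ≤ (m a₁ : ℝ) := by
    have : δ₀ * P a₁ ≤ (m a₁ : ℝ) / s := by rw [← hmspec a₁]; exact hPhat1
    rw [le_div_iff₀ hs0] at this; linarith
  -- m a₁ ≥ 4
  have hm1 : 4 ≤ m a₁ := by
    have h3s : 3 / (s * δ₀) < P a₁ := lt_of_lt_of_le hmin (min_le_left _ _)
    have : (3:ℝ) < s * (δ₀ * P a₁) := by
      rw [div_lt_iff₀ (by positivity : 0 < s * δ₀)] at h3s
      nlinarith
    have h4 : (3:ℝ) < (m a₁ : ℝ) := lt_of_lt_of_le this hk1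
    have : 3 < m a₁ := by exact_mod_cast h4
    omega
  have hm3 : 3 ≤ m a₁ := by omega
  set mb : A → ℕ := fun a => if a = a₁ then m a₁ - 3 else if a = a₂ then m a₂ + 3 else m a with hmbdef
  -- rewrite the two typeProb arguments
  have harghat : Phat = fun a => (m a : ℝ) / s := funext hmspec
  have hargbar : (fun a => if a = a₁ then Phat a₁ - 3 / s else if a = a₂ then Phat a₂ + 3 / s
      else Phat a) = fun a => (mb a : ℝ) / s := by
    funext a
    by_cases h1 : a = a₁
    · simp only [h1, if_pos rfl, hmbdef]
      rw [hmspec a₁, Nat.cast_sub hm3]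
      push_cast; ring
    by_cases h2 : a = a₂
    · simp only [h2, if_neg hne.symm, if_pos rfl, hmbdef]
      rw [hmspec a₂]
      push_cast; ring
    · simp only [if_neg h1, if_neg h2, hmbdef]
      exact hmspec a
  rw [hargbar, harghat, typeProb_eq_card_mul P (by omega) m, typeProb_eq_card_mul P (by omega) mb]
  -- abbreviations
  set c1 : ℕ := (m a₁).choose 3 with hc1def
  set c2 : ℕ := (m a₂ + 3).choose 3 with hc2def
  have F1 : (Tk s m).card * c1 = (Tk s mb).card * c2 := card_Tk_mul_choose a₁ a₂ hne m hm3
  have F2 : (∏ a, P a ^ mb a) * P a₁ ^ 3 = (∏ a, P a ^ m a) * P a₂ ^ 3 :=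
    weight_shift P a₁ a₂ hne m hm3
  obtain ⟨n, hn⟩ : ∃ n, m a₁ = n + 4 := ⟨m a₁ - 4, by omega⟩
  obtain ⟨t, ht⟩ : ∃ t, m a₂ = t + 1 := ⟨m a₂ - 1, by omega⟩
  have F3 : 6 * c1 = (n+4)*(n+3)*(n+2) := by
    rw [hc1def, hn]; exact six_choose_three (n+1)
  have F4 : 6 * c2 = (t+4)*(t+3)*(t+2) := by
    rw [hc2def, ht]; exact six_choose_three (t+1)
  have F3R : 6 * (c1:ℝ) = ((n:ℝ)+4)*((n:ℝ)+3)*((n:ℝ)+2) := by exact_mod_cast F3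
  have F4R : 6 * (c2:ℝ) = ((t:ℝ)+4)*((t:ℝ)+3)*((t:ℝ)+2) := by exact_mod_cast F4
  have hK1 : (m a₁ : ℝ) = (n:ℝ) + 4 := by rw [hn]; push_cast; ring
  have hK2 : (m a₂ : ℝ) = (t:ℝ) + 1 := by rw [ht]; push_cast; ring
  have htn : (0:ℝ) ≤ (t:ℝ) := Nat.cast_nonneg t
  have hnn : (0:ℝ) ≤ (n:ℝ) := Nat.cast_nonneg n
  have hc2ub : (c2:ℝ) ≤ 4 * (m a₂ : ℝ)^3 := by rw [hK2]; nlinarith [F4R, htn, mul_nonneg htn htn, mul_nonneg (mul_nonneg htn htn) htn]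
  have hc1lb : (m a₁ : ℝ)^3 ≤ 16 * (c1:ℝ) := by rw [hK1]; nlinarith [F3R, hnn, mul_nonneg hnn hnn, mul_nonneg (mul_nonneg hnn hnn) hnn]
  have hc1pos : (0:ℝ) < (c1:ℝ) := by nlinarith [F3R, hnn, mul_nonneg hnn hnn, mul_nonneg (mul_nonneg hnn hnn) hnn]
  -- core inequality
  have h2' : (δ₀ * (m a₂:ℝ))^3 ≤ (s * P a₂)^3 := by
    apply pow_le_pow_left₀ (by positivity) hk2
  have h1' : (s * (δ₀ * P a₁))^3 ≤ ((m a₁:ℝ))^3 := by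
    apply pow_le_pow_left₀ (by positivity) hk1
  have core : δ₀^6/64 * (c2:ℝ) * P a₁^3 ≤ (c1:ℝ) * P a₂^3 := by
    calc δ₀^6/64 * (c2:ℝ) * P a₁^3
        ≤ δ₀^6/64 * (4 * (m a₂:ℝ)^3) * P a₁^3 := by gcongr
      _ = δ₀^3/16 * ((δ₀ * (m a₂:ℝ))^3 * P a₁^3) := by ring
      _ ≤ δ₀^3/16 * ((s * P a₂)^3 * P a₁^3) := by gcongr
      _ = (s * (δ₀ * P a₁))^3 / 16 * P a₂^3 := by ring
      _ ≤ (m a₁:ℝ)^3 / 16 * P a₂^3 := by gcongr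
      _ ≤ (c1:ℝ) * P a₂^3 := by
          have : (m a₁:ℝ)^3/16 ≤ (c1:ℝ) := by linarith
          gcongr
  -- final assembly
  have hw : (0:ℝ) ≤ ∏ a, P a ^ m a := Finset.prod_nonneg fun a _ => pow_nonneg (hP.1 a) _
  have F1R : ((Tk s m).card : ℝ) * (c1:ℝ) = ((Tk s mb).card : ℝ) * (c2:ℝ) := by exact_mod_cast F1
  have key := mul_le_mul_of_nonneg_right core
    (mul_nonneg (Nat.cast_nonneg (Tk s mb).card) hw)
  have main : δ₀^6/64 * (((Tk s m).card : ℝ) * ∏ a, P a ^ m a) * ((c1:ℝ) * P a₁^3)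
      ≤ (((Tk s mb).card : ℝ) * ∏ a, P a ^ mb a) * ((c1:ℝ) * P a₁^3) := by
    have l1 : δ₀^6/64 * (((Tk s m).card : ℝ) * ∏ a, P a ^ m a) * ((c1:ℝ) * P a₁^3)
        = (δ₀^6/64 * (c2:ℝ) * P a₁^3) * (((Tk s mb).card : ℝ) * ∏ a, P a ^ m a) := by
      linear_combination (δ₀^6/64 * (∏ a, P a ^ m a) * P a₁^3) * F1R
    have l2 : (((Tk s mb).card : ℝ) * ∏ a, P a ^ mb a) * ((c1:ℝ) * P a₁^3)
        = ((c1:ℝ) * P a₂^3) * (((Tk s mb).card : ℝ) * ∏ a, P a ^ m a) := by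
      linear_combination (((Tk s mb).card : ℝ) * (c1:ℝ)) * F2
    rw [l1, l2]; exact key
  exact le_of_mul_le_mul_right main (mul_pos hc1pos (pow_pos hPa1 3))

end Async
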